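/- Let q be a finite-dimensional Lie algebra over a field k of characteristic 0. For any linear form ξ ∈ q*, the stabilizer q_ξ is a Lie subalgebra of q and ind q_ξ ≥ ind q. -/

import Mathlib

open Module

section Defs

variable (k : Type*) [Field k]

/-- The stabiliser `q_ξ = {x ∈ q | ξ ⁅x, y⁆ = 0 for all y}` of a linear form `ξ ∈ q*`. -/
def lieStab (q : Type*) [LieRing q] [LieAlgebra k q] (ξ : Module.Dual k q) :
    Submodule k q where
  carrier := {x : q | ∀ y : q, ξ ⁅x, y⁆ = 0}
  add_mem' := by
    intro a b ha hb y
    rw [add_lie, map_add, ha y, hb y, add_zero]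
  zero_mem' := by
    intro y
    rw [zero_lie, map_zero]
  smul_mem' := by
    intro c a ha y
    rw [smul_lie, map_smul, ha y, smul_zero]

/-- The index of a Lie algebra: the minimal dimension of the stabiliser of a linear form. -/
noncomputable def lieIndex (q : Type*) [LieRing q] [LieAlgebra k q] : ℕ :=
  ⨅ ξ : Module.Dual k q, Module.finrank k ↥(lieStab k q ξ)

end Defs

section AuxSemicont

open Polynomial

/-- Semicontinuity of kernels: for linear maps `M N : V → U` over an infinite field, there is a
nonzero `c` such that `dim ker (M + c N) ≤ dim ker M`. -/
lemma exists_ne_zero_finrank_ker_le {k V U : Type*} [Field k] [Infinite k]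
    [AddCommGroup V] [Module k V] [AddCommGroup U] [Module k U]
    [FiniteDimensional k V] (M N : V →ₗ[k] U) :
    ∃ c : k, c ≠ 0 ∧
      finrank k (LinearMap.ker (M + c • N)) ≤ finrank k (LinearMap.ker M) := by
  classical
  set r := finrank k (LinearMap.range M) with hr
  let b : Basis (Fin r) k (LinearMap.range M) := finBasis k _
  have hv : ∀ i, ∃ v : V, M v = (b i : U) := fun i => (b i).2
  choose v hvspec using hv
  obtain ⟨W, hW⟩ := Submodule.exists_isCompl (LinearMap.range M)
  let π := (LinearMap.range M).linearProjOfIsCompl W hW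
  let f : Fin r → (U →ₗ[k] k) := fun j => (b.coord j) ∘ₗ π
  have hfM : ∀ j i, f j (M (v i)) = if i = j then 1 else 0 := by
    intro j i
    have h1 : π (M (v i)) = b i := by
      rw [hvspec]; exact Submodule.linearProjOfIsCompl_apply_left hW (b i)
    simp only [f, LinearMap.comp_apply, h1, Basis.coord_apply, Basis.repr_self,
      Finsupp.single_apply]
  -- the polynomial given by the determinant of the "generic" matrix
  set matP : Matrix (Fin r) (Fin r) k[X] :=
    Matrix.of (fun j i => C (f j (M (v i))) + X * C (f j (N (v i)))) with hmatP
  set P : k[X] := matP.det with hP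
  have hevalP : ∀ c : k, P.eval c =
      (Matrix.of (fun j i => f j ((M + c • N) (v i)))).det := by
    intro c
    rw [hP, ← Polynomial.coe_evalRingHom, RingHom.map_det]
    congr 1
    rw [hmatP]
    ext j i
    simp only [RingHom.mapMatrix_apply, Matrix.map_apply, Matrix.of_apply,
      Polynomial.coe_evalRingHom, Polynomial.eval_add, Polynomial.eval_mul,
      Polynomial.eval_C, Polynomial.eval_X, LinearMap.add_apply, LinearMap.smul_apply,
      map_add, map_smul, smul_eq_mul]
  have heval0 : P.eval 0 = 1 := by
    rw [hevalP 0]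
    have : (Matrix.of (fun j i => f j ((M + (0:k) • N) (v i)))) =
        (1 : Matrix (Fin r) (Fin r) k) := by
      ext j i
      simp [hfM j i, Matrix.one_apply, eq_comm]
    rw [this, Matrix.det_one]
  have hPne : P ≠ 0 := fun h => by simp [h] at heval0
  -- find a nonzero `c` avoiding the roots
  have hfin : (insert (0:k) {x | P.IsRoot x}).Finite :=
    (Polynomial.finite_setOf_isRoot hPne).insert 0
  obtain ⟨c, hc⟩ := hfin.infinite_compl.nonempty
  simp only [Set.mem_compl_iff, Set.mem_insert_iff, Set.mem_setOf_eq, not_or] at hc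
  obtain ⟨hc0, hcroot⟩ := hc
  refine ⟨c, hc0, ?_⟩
  -- the vectors `(M + c N) (v i)` are linearly independent
  have hdet : (Matrix.of (fun j i => f j ((M + c • N) (v i)))).det ≠ 0 := by
    rw [← hevalP c]; exact hcroot
  set w : Fin r → U := fun i => (M + c • N) (v i) with hw
  have hwind : LinearIndependent k w := by
    rw [Fintype.linearIndependent_iff]
    intro g hg
    have hAg : (Matrix.of (fun j i => f j (w i))).mulVec g = 0 := by
      funext j
      have : f j (∑ i, g i • w i) = 0 := by rw [hg, map_zero]
      rw [map_sum] at this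
      simp only [map_smul, smul_eq_mul] at this
      simpa [Matrix.mulVec, dotProduct, mul_comm] using this
    intro i
    by_contra hgi
    have hgne : g ≠ 0 := fun h => hgi (by simp [h])
    exact hdet ((Matrix.exists_mulVec_eq_zero_iff).mp ⟨g, hgne, hAg⟩)
  -- hence the rank of `M + c N` is at least `r`
  have hrle : r ≤ finrank k (LinearMap.range (M + c • N)) := by
    haveI : Module.Finite k (LinearMap.range (M + c • N)) := inferInstance
    let w' : Fin r → (LinearMap.range (M + c • N)) :=
      fun i => ⟨w i, LinearMap.mem_range_self _ _⟩
    have hw'ind : LinearIndependent k w' := by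
      have : w = (LinearMap.range (M + c • N)).subtype ∘ w' := rfl
      rw [this] at hwind
      exact LinearIndependent.of_comp _ hwind
    simpa using hw'ind.fintype_card_le_finrank
  have h1 := LinearMap.finrank_range_add_finrank_ker M
  have h2 := LinearMap.finrank_range_add_finrank_ker (M + c • N)
  omega

end AuxSemicont

section AuxBrk

variable {k q : Type*} [Field k] [LieRing q] [LieAlgebra k q]

/-- The linear map `x ↦ ξ ⁅x, ·⁆`. -/
noncomputable def brkMap (ξ : Module.Dual k q) : q →ₗ[k] Module.Dual k q :=
  LinearMap.mk₂ k (fun x y => ξ ⁅x, y⁆)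
    (fun m₁ m₂ n => by simp [add_lie])
    (fun c m n => by simp [smul_lie])
    (fun m n₁ n₂ => by simp [lie_add])
    (fun c m n => by simp [lie_smul])

@[simp] lemma brkMap_apply (ξ : Module.Dual k q) (x y : q) :
    brkMap ξ x y = ξ ⁅x, y⁆ := rfl

end AuxBrk

/-- For any linear form `ξ` on a finite-dimensional Lie algebra `q` over a field of
characteristic zero, the stabiliser `q_ξ` is a Lie subalgebra of `q` and
`ind q_ξ ≥ ind q`. -/
theorem lieIndex_stab_ge
    (k : Type*) [Field k] [CharZero k]
    (q : Type*) [LieRing q] [LieAlgebra k q] [FiniteDimensional k q]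
    (ξ : Module.Dual k q) :
    ∃ H : LieSubalgebra k q,
      (H : Set q) = {x : q | ∀ y : q, ξ ⁅x, y⁆ = 0} ∧
      lieIndex k ↥H ≥ lieIndex k q := by
  classical
  haveI : Infinite k := CharZero.infinite k
  let H : LieSubalgebra k q :=
    { lieStab k q ξ with
      lie_mem' := by
        intro x y hx hy
        intro z
        have hx' : ∀ w : q, ξ ⁅x, w⁆ = 0 := hx
        have hy' : ∀ w : q, ξ ⁅y, w⁆ = 0 := hy
        rw [lie_lie, map_sub, hx' ⁅y, z⁆, hy' ⁅x, z⁆, sub_zero] }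
  have hmemH : ∀ x : q, x ∈ H ↔ ∀ y : q, ξ ⁅x, y⁆ = 0 := fun x => Iff.rfl
  refine ⟨H, rfl, ?_⟩
  rw [ge_iff_le]
  have key : ∀ η : Module.Dual k ↥H, lieIndex k q ≤ finrank k ↥(lieStab k ↥H η) := by
    intro η
    obtain ⟨η', hη'⟩ := LinearMap.exists_extend (p := H.toSubmodule) η
    set B : q →ₗ[k] Module.Dual k q := brkMap ξ with hB
    set Cm : q →ₗ[k] Module.Dual k q := brkMap η' with hCm
    set D : q →ₗ[k] Module.Dual k ↥H :=
      (H.toSubmodule.subtype.dualMap) ∘ₗ Cm with hD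
    set M := B.prod D with hM
    set N := Cm.prod (0 : q →ₗ[k] Module.Dual k ↥H) with hN
    have hres : ∀ z : ↥H, η' (z : q) = η z := by
      intro z
      have := DFunLike.congr_fun hη' z
      exact this
    obtain ⟨c, hc0, hle⟩ := exists_ne_zero_finrank_ker_le M N
    -- identify `ker (M + c N)` with the stabiliser of `ξ + c η'`
    have hker1 : LinearMap.ker (M + c • N) = lieStab k q (ξ + c • η') := by
      ext x
      constructor
      · intro hx
        have hx' : (M + c • N) x = 0 := hx
        intro y
        have h1 : ((M + c • N) x).1 y = 0 := by rw [hx']; rfl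
        simpa [hM, hN, hB, hCm, LinearMap.add_apply, LinearMap.smul_apply] using h1
      · intro hx
        have hx' : ∀ y : q, ξ ⁅x, y⁆ + c * η' ⁅x, y⁆ = 0 := by
          intro y
          have := hx y
          simpa [LinearMap.add_apply, LinearMap.smul_apply, smul_eq_mul] using this
        have hDx : D x = 0 := by
          ext yH
          have hyH : (yH : q) ∈ H := yH.2
          have hξ : ξ ⁅x, (yH : q)⁆ = 0 := by
            have h := (hmemH _).mp hyH x
            rw [← lie_skew, map_neg, h, neg_zero]
          have := hx' (yH : q)
          rw [hξ, zero_add] at this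
          have hηx : η' ⁅x, (yH : q)⁆ = 0 := by
            rcases mul_eq_zero.mp this with h | h
            · exact absurd h hc0
            · exact h
          simp [hD, hCm]; exact hηx
        show (M + c • N) x = 0
        have : (M + c • N) x = (B x + c • Cm x, D x) := by
          simp [hM, hN, LinearMap.prod_apply, LinearMap.add_apply, LinearMap.smul_apply]
        rw [this, hDx]
        refine Prod.ext ?_ rfl
        show B x + c • Cm x = 0
        ext y
        simpa [hB, hCm, smul_eq_mul] using hx' y
    -- identify `ker M` with the stabiliser of `η` in `H`
    have hker0 : (lieStab k ↥H η).map H.toSubmodule.subtype = LinearMap.ker M := by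
      ext x
      simp only [Submodule.mem_map, LinearMap.mem_ker]
      constructor
      · rintro ⟨xh, hxh, rfl⟩
        have hxH : (xh : q) ∈ H := xh.2
        have hBx : B (xh : q) = 0 := by
          ext y
          simpa [hB] using (hmemH _).mp hxH y
        have hDx : D (xh : q) = 0 := by
          ext yH
          have h1 : η ⁅(show ↥H from xh), yH⁆ = 0 := hxh yH
          have h3 : η' ⁅(xh : q), (yH : q)⁆ = 0 := by
            rw [← LieSubalgebra.coe_bracket, hres, h1]
          simp [hD, hCm]; exact h3
        show M (xh : q) = 0
        rw [hM]
        simp [LinearMap.prod_apply, hBx, hDx, Prod.ext_iff]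
      · intro hx
        have hBx : B x = 0 := congrArg Prod.fst hx
        have hDx : D x = 0 := congrArg Prod.snd hx
        have hxH : x ∈ H := by
          rw [hmemH]
          intro y
          have := congrArg (fun g => g y) hBx
          simpa [hB] using this
        refine ⟨⟨x, hxH⟩, ?_, rfl⟩
        intro yH
        have h1 : η' ⁅x, (yH : q)⁆ = 0 := by
          have := congrArg (fun g => g yH) hDx
          simp [hD, hCm] at this; exact this
        show η ⁅(⟨x, hxH⟩ : ↥H), yH⁆ = 0
        rw [← hres, LieSubalgebra.coe_bracket]
        exact h1
    have hfr0 : finrank k ↥(LinearMap.ker M) = finrank k ↥(lieStab k ↥H η) := by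
      rw [← hker0]
      exact Submodule.finrank_map_subtype_eq _ _
    calc lieIndex k q ≤ finrank k ↥(lieStab k q (ξ + c • η')) :=
          ciInf_le (OrderBot.bddBelow _) _
      _ = finrank k ↥(LinearMap.ker (M + c • N)) := by rw [hker1]
      _ ≤ finrank k ↥(LinearMap.ker M) := hle
      _ = finrank k ↥(lieStab k ↥H η) := hfr0
  exact le_ciInf key
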